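/- Let r ≤ m be nonnegative integers and let u_1, …, u_t ∈ 𝔽₂^m be distinct points such that the degree-r evaluation vectors u_1^r, …, u_t^r are linearly independent over 𝔽₂. Then for every k ∈ [t], setting v = u_k, there exists a multilinear polynomial f ∈ 𝔽₂[x_1,…,x_m] of total degree at most r satisfying: (1) ∑_{i=1}^t f(u_i) = f(v) = 1; (2) ∑_{i=1}^t (f·M)(u_i) = M(v) for every multilinear monomial M of degree at most r; and (3) ∑_{i=1}^t (f·M·(x_ℓ + v_ℓ + 1))(u_i) = M(v) for every ℓ ∈ [m] and every multilinear monomial M of degree at most r. -/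

import Mathlib

open MvPolynomial

/-- The degree-`r` evaluation vector of a point `u ∈ 𝔽₂^m`. -/
def evalVec (m r : ℕ) (u : Fin m → ZMod 2) :
    {S : Finset (Fin m) // S.card ≤ r} → ZMod 2 :=
  fun S => ∏ i ∈ S.1, u i

/-- A polynomial is multilinear if every variable occurs with individual degree at most 1. -/
def IsMultilinear {m : ℕ} (f : MvPolynomial (Fin m) (ZMod 2)) : Prop :=
  ∀ d ∈ f.support, ∀ i, d i ≤ 1

/-- Dual functional for a linearly independent family. -/
lemma exists_dual_functional {K V ι : Type*} [Field K] [AddCommGroup V] [Module K V]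
    [Fintype ι] [DecidableEq ι] (w : ι → V) (h : LinearIndependent K w) (k : ι) :
    ∃ g : V →ₗ[K] K, ∀ j, g (w j) = if j = k then 1 else 0 := by
  set T : (ι → K) →ₗ[K] V := Fintype.linearCombination K w with hT
  have hker : LinearMap.ker T = ⊥ := by
    rw [LinearMap.ker_eq_bot']
    intro x hx
    funext j
    exact Fintype.linearIndependent_iff.mp h x (by simpa [hT, Fintype.linearCombination_apply] using hx) j
  obtain ⟨g', hg'⟩ := T.exists_leftInverse_of_injective hker
  refine ⟨(LinearMap.proj k).comp g', fun j => ?_⟩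
  have hwj : T (Pi.single j 1) = w j := by
    simp [hT, Fintype.linearCombination_apply, Pi.single_apply]
  have hthis := LinearMap.congr_fun hg' (Pi.single j 1)
  rw [LinearMap.comp_apply, hwj] at hthis
  rw [LinearMap.comp_apply, LinearMap.proj_apply, hthis, LinearMap.id_apply, Pi.single_apply]
  by_cases hjk : j = k
  · simp [hjk]
  · simp [Ne.symm hjk, hjk]

lemma prod_X_monomial {σ R : Type*} [CommSemiring R] [DecidableEq σ] (S : Finset σ) (c : R) :
    (C c * ∏ i ∈ S, (X i : MvPolynomial σ R)) = monomial (∑ i ∈ S, Finsupp.single i 1) c := by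
  induction S using Finset.induction_on with
  | empty => simp [monomial_zero']
  | insert a s hnotmem ih =>
    rw [Finset.prod_insert hnotmem, Finset.sum_insert hnotmem, ← mul_assoc,
      mul_comm (C c) (X a), mul_assoc, ih, X, monomial_mul, one_mul, add_comm]

theorem stmt4 (m r t : ℕ) (hrm : r ≤ m)
    (u : Fin t → (Fin m → ZMod 2)) (hinj : Function.Injective u)
    (hind : LinearIndependent (ZMod 2) (fun j => evalVec m r (u j))) :
    ∀ k : Fin t, ∃ f : MvPolynomial (Fin m) (ZMod 2),
      IsMultilinear f ∧ f.totalDegree ≤ r ∧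
      ((∑ i : Fin t, eval (u i) f) = 1 ∧ eval (u k) f = 1) ∧
      (∀ S : Finset (Fin m), S.card ≤ r →
        (∑ i : Fin t, eval (u i) (f * ∏ l ∈ S, X l)) = ∏ l ∈ S, u k l) ∧
      (∀ ℓ : Fin m, ∀ S : Finset (Fin m), S.card ≤ r →
        (∑ i : Fin t, eval (u i) (f * (∏ l ∈ S, X l) * (X ℓ + C (u k ℓ) + 1)))
          = ∏ l ∈ S, u k l) := by
  intro k
  obtain ⟨g, hg⟩ := exists_dual_functional _ hind k
  let ι := {S : Finset (Fin m) // S.card ≤ r}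
  set a : ι → ZMod 2 := fun S => g (Pi.single S 1) with ha
  set f : MvPolynomial (Fin m) (ZMod 2) :=
    ∑ S : ι, C (a S) * ∏ i ∈ S.1, X i with hf
  -- evaluation of f
  have heval : ∀ j, eval (u j) f = if j = k then 1 else 0 := by
    intro j
    rw [← hg j]
    have hc : evalVec m r (u j) = ∑ S : ι, evalVec m r (u j) S • Pi.single S 1 := by
      funext S
      simp [Pi.single_apply, Finset.sum_ite_eq']
    calc eval (u j) f = ∑ S : ι, a S * ∏ i ∈ S.1, u j i := by
          simp [hf, eval_prod]
      _ = g (evalVec m r (u j)) := by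
          rw [hc, map_sum]
          simp [ha, evalVec, mul_comm]
  -- support structure
  have hsupp : ∀ d ∈ f.support, ∃ S : ι, d = ∑ i ∈ S.1, Finsupp.single i 1 := by
    intro d hd
    rw [hf] at hd
    have := Finset.mem_biUnion.mp (MvPolynomial.support_sum hd)
    obtain ⟨S, -, hS⟩ := this
    rw [prod_X_monomial] at hS
    exact ⟨S, Finset.mem_singleton.mp (support_monomial_subset hS)⟩
  have hcoord : ∀ (S : Finset (Fin m)) (i : Fin m),
      (∑ j ∈ S, Finsupp.single j 1 : Fin m →₀ ℕ) i = if i ∈ S then 1 else 0 := by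
    intro S i
    rw [Finset.sum_apply']
    simp [Finsupp.single_apply, Finset.sum_ite_eq' S i]
  refine ⟨f, ?_, ?_, ⟨?_, ?_⟩, ?_, ?_⟩
  · intro d hd i
    obtain ⟨S, rfl⟩ := hsupp d hd
    rw [hcoord]
    split <;> simp
  · rw [hf]
    refine le_trans (totalDegree_finset_sum _ _) (Finset.sup_le fun S _ => ?_)
    rw [prod_X_monomial]
    refine le_trans (totalDegree_monomial_le _ _) ?_
    have hdeg : ∀ T : Finset (Fin m),
        ((∑ i ∈ T, Finsupp.single i (1 : ℕ)).sum fun _ e => e) = T.card := by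
      intro T
      induction T using Finset.induction_on with
      | empty => simp
      | insert b s hnm ih =>
        rw [Finset.sum_insert hnm, Finsupp.sum_add_index (by simp) (by simp),
          Finsupp.sum_single_index rfl, ih, Finset.card_insert_of_notMem hnm, add_comm]
    show ((∑ i ∈ S.1, Finsupp.single i (1 : ℕ)).sum fun _ e => e) ≤ r
    rw [hdeg]
    exact S.2
  · simp [heval]
  · simp [heval]
  · intro S hS
    simp only [map_mul, eval_prod, eval_X]
    simp [heval, ite_mul, Finset.sum_ite_eq']
  · intro ℓ S hS
    simp only [map_mul, eval_prod, eval_X, map_add, eval_C, map_one]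
    have h1 : u k ℓ + u k ℓ + 1 = 1 := by
      rw [CharTwo.add_self_eq_zero, zero_add]
    simp [heval, ite_mul, Finset.sum_ite_eq', h1]
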